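/- Let G be a d-regular graph on n vertices with second-largest absolute normalized adjacency eigenvalue λ. For any vertex subset S ⊂ V: ∑_{v ∈ V} (|Γ(v) ∩ S| − d|S|/n)² ≤ (λd)²·|S|·(1 − |S|/n). -/

import Mathlib

open Finset

/-- Expander mixing variant: let `G` be a `d`-regular graph on `n` vertices whose
normalized adjacency matrix has second-largest absolute eigenvalue at most `λ`
(expressed spectrally: `‖A x‖ ≤ λ d ‖x‖` for all `x` orthogonal to the all-ones
vector).  Then for every vertex subset `S`,
`∑_{v} (|Γ(v) ∩ S| − d|S|/n)² ≤ (λd)²·|S|·(1 − |S|/n)`. -/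
theorem stmt_15 {V : Type*} [Fintype V] [DecidableEq V] (G : SimpleGraph V)
    [DecidableRel G.Adj] (n d : ℕ) (hn : Fintype.card V = n) (hn0 : 0 < n)
    (hreg : G.IsRegularOfDegree d) (lam : ℝ) (hlam : 0 ≤ lam)
    (hspec : ∀ x : V → ℝ, ∑ v : V, x v = 0 →
      ∑ v : V, ((G.adjMatrix ℝ).mulVec x v) ^ 2 ≤ (lam * d) ^ 2 * ∑ v : V, (x v) ^ 2)
    (S : Finset V) :
    ∑ v : V, (((G.neighborFinset v ∩ S).card : ℝ) - d * S.card / n) ^ 2 ≤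
      (lam * d) ^ 2 * S.card * (1 - S.card / n) := by
  set c : ℝ := S.card / n with hc
  set x : V → ℝ := fun v => (if v ∈ S then (1:ℝ) else 0) - c with hx
  have hns : (S.card : ℝ) ≤ n := by
    rw [← hn]; exact_mod_cast S.card_le_univ.trans_eq (by simp)
  have hnpos : (0:ℝ) < n := by exact_mod_cast hn0
  have hsum0 : ∑ v : V, x v = 0 := by
    simp only [hx, Finset.sum_sub_distrib, Finset.sum_ite_mem, Finset.univ_inter,
      Finset.sum_const, Finset.sum_boole]
    simp [hc, hn, Finset.inter_eq_right.mpr S.subset_univ]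
    field_simp
    ring
  have hmv : ∀ v : V, (G.adjMatrix ℝ).mulVec x v =
      ((G.neighborFinset v ∩ S).card : ℝ) - d * S.card / n := by
    intro v
    rw [SimpleGraph.adjMatrix_mulVec_apply]
    simp only [hx, Finset.sum_sub_distrib, Finset.sum_const, nsmul_eq_mul]
    rw [Finset.sum_ite_mem]
    simp [hreg v, hc]
    ring
  have hsq : ∑ v : V, (x v) ^ 2 = S.card * (1 - c) := by
    have key : ∀ v : V, (x v) ^ 2 =
        (if v ∈ S then (1:ℝ) else 0) * (1 - 2*c) + c^2 := by
      intro v; simp only [hx]; split <;> ring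
    rw [Finset.sum_congr rfl fun v _ => key v, Finset.sum_add_distrib,
      Finset.sum_const, ← Finset.sum_mul]
    simp only [Finset.sum_ite_mem, Finset.univ_inter, Finset.sum_const, nsmul_eq_mul,
      mul_one, Finset.card_univ, hn]
    rw [hc]
    field_simp
    ring
  have := hspec x hsum0
  rw [hsq] at this
  calc ∑ v : V, (((G.neighborFinset v ∩ S).card : ℝ) - d * S.card / n) ^ 2
      = ∑ v : V, ((G.adjMatrix ℝ).mulVec x v) ^ 2 := by
        exact Finset.sum_congr rfl fun v _ => by rw [hmv v]
    _ ≤ (lam * d) ^ 2 * (S.card * (1 - c)) := this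
    _ = (lam * d) ^ 2 * S.card * (1 - S.card / n) := by rw [hc]; ring
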